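/- Let H_{[0,N]} be a Jacobi matrix with eigenvalues λ_0 < ... < λ_N and associated orthonormal denominator polynomials P̂_k. Then the condition P̂_N(λ_k) = (−1)^{N+k} for all k = 0, ..., N holds if and only if H_{[0,N]} is persymmetric (mirror symmetric), i.e., a_k = a_{N−k} for all k and b_n = b_{N−1−n} for all n; equivalently H_{[0,N]} = R H_{[0,N]} R where R is the reversal (antidiagonal permutation) matrix. -/
import Mathlib


open Polynomial

/-- The orthonormal polynomials `P̂_k`:
    `P̂_{-1} = 0`, `P̂_0 = 1`, `b_k P̂_{k+1}(x) = (x - a_k) P̂_k(x) - b_{k-1} P̂_{k-1}(x)`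
    with `b_{-1} = 1`. -/
noncomputable def phat (a b : ℕ → ℝ) : ℕ → Polynomial ℝ
  | 0 => 1
  | 1 => C (b 0)⁻¹ * (X - C (a 0))
  | (k + 2) => C (b (k + 1))⁻¹ *
      ((X - C (a (k + 1))) * phat a b (k + 1) - C (b k) * phat a b k)

namespace Jac
variable {a b : ℕ → ℝ} {N : ℕ}

lemma phat_zero (a b : ℕ → ℝ) : phat a b 0 = 1 := rfl
lemma phat_one (a b : ℕ → ℝ) : phat a b 1 = C (b 0)⁻¹ * (X - C (a 0)) := rfl
lemma phat_two (a b : ℕ → ℝ) (k : ℕ) : phat a b (k+2) = C (b (k + 1))⁻¹ *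
      ((X - C (a (k + 1))) * phat a b (k + 1) - C (b k) * phat a b k) := rfl

lemma phat_rec0 (hb0 : b 0 ≠ 0) : C (b 0) * phat a b 1 = X - C (a 0) := by
  rw [phat_one, ← mul_assoc, ← C_mul, mul_inv_cancel₀ hb0, C_1, one_mul]

lemma phat_rec (n : ℕ) (hbn : b (n+1) ≠ 0) :
    C (b (n+1)) * phat a b (n+2)
      = (X - C (a (n+1))) * phat a b (n+1) - C (b n) * phat a b n := by
  rw [phat_two, ← mul_assoc, ← C_mul, mul_inv_cancel₀ hbn, C_1, one_mul]

lemma eval_rec0 (hb0 : b 0 ≠ 0) (x : ℝ) : b 0 * eval x (phat a b 1) = x - a 0 := by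
  have := congrArg (eval x) (phat_rec0 (a := a) hb0); simpa using this

lemma eval_rec (n : ℕ) (hbn : b (n+1) ≠ 0) (x : ℝ) :
    b (n+1) * eval x (phat a b (n+2))
      = (x - a (n+1)) * eval x (phat a b (n+1)) - b n * eval x (phat a b n) := by
  have := congrArg (eval x) (phat_rec (a := a) n hbn); simpa using this

lemma no_consec (hb : ∀ j ≤ N, (0:ℝ) < b j) (x : ℝ) :
    ∀ j ≤ N, ¬(eval x (phat a b j) = 0 ∧ eval x (phat a b (j+1)) = 0) := by
  intro j
  induction j with
  | zero => rintro _ ⟨h0, -⟩; simp [phat_zero] at h0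
  | succ j ih =>
    rintro hj ⟨h1, h2⟩
    have hr := eval_rec (a := a) j (ne_of_gt (hb (j+1) hj)) x
    have hbj : b j ≠ 0 := ne_of_gt (hb j (by omega))
    rw [h1, h2] at hr
    simp only [mul_zero, zero_sub, zero_eq_neg, mul_eq_zero] at hr
    exact ih (by omega) ⟨hr.resolve_left hbj, h1⟩

lemma phatN_ne_zero (hb : ∀ j ≤ N, (0:ℝ) < b j) {x : ℝ}
    (hz : eval x (phat a b (N+1)) = 0) : eval x (phat a b N) ≠ 0 :=
  fun h => no_consec hb x N le_rfl ⟨h, hz⟩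

lemma cd_confluent (hb : ∀ j ≤ N, (0:ℝ) < b j) :
    ∀ n ≤ N, ∑ j ∈ Finset.range (n+1), (phat a b j)^2
      = C (b n) * (derivative (phat a b (n+1)) * phat a b n
          - derivative (phat a b n) * phat a b (n+1)) := by
  intro n
  induction n with
  | zero =>
    intro _
    have h1 := phat_rec0 (a := a) (ne_of_gt (hb 0 (Nat.zero_le N)))
    have h2 := congrArg derivative h1
    simp only [derivative_mul, derivative_sub, derivative_C, derivative_X, zero_mul, zero_add,
      sub_zero, mul_one] at h2
    simp [phat_zero]
    linear_combination -h2
  | succ n ih =>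
    intro hn
    have hb1 : b (n+1) ≠ 0 := ne_of_gt (hb (n+1) hn)
    have h1 := phat_rec (a := a) n hb1
    have h2 := congrArg derivative h1
    simp only [derivative_mul, derivative_sub, derivative_C, derivative_X, zero_mul, zero_add,
      sub_zero, mul_one, one_mul] at h2
    rw [Finset.sum_range_succ, ih (le_trans (Nat.le_succ n) hn)]
    have e1 : phat a b (n+1+1) = phat a b (n+2) := rfl
    rw [e1]
    linear_combination (derivative (phat a b (n+1))) * h1 - (phat a b (n+1)) * h2

lemma cd_two (hb : ∀ j ≤ N, (0:ℝ) < b j) : ∀ n ≤ N, ∀ x y : ℝ,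
    (x - y) * ∑ j ∈ Finset.range (n+1), eval x (phat a b j) * eval y (phat a b j)
      = b n * (eval x (phat a b (n+1)) * eval y (phat a b n)
          - eval x (phat a b n) * eval y (phat a b (n+1))) := by
  intro n
  induction n with
  | zero =>
    intro _ x y
    have hx := eval_rec0 (a := a) (ne_of_gt (hb 0 (Nat.zero_le N))) x
    have hy := eval_rec0 (a := a) (ne_of_gt (hb 0 (Nat.zero_le N))) y
    simp [phat_zero]
    linear_combination hy - hx
  | succ n ih =>
    intro hn x y
    have hb1 : b (n+1) ≠ 0 := ne_of_gt (hb (n+1) hn)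
    have hx := eval_rec (a := a) n hb1 x
    have hy := eval_rec (a := a) n hb1 y
    rw [Finset.sum_range_succ, mul_add, ih (le_trans (Nat.le_succ n) hn) x y]
    have e1 : phat a b (n+1+1) = phat a b (n+2) := rfl
    rw [e1]
    linear_combination (eval x (phat a b (n+1))) * hy - (eval y (phat a b (n+1))) * hx

lemma phat_congr (a a' b b' : ℕ → ℝ) : ∀ n, (∀ i < n, a i = a' i) → (∀ i < n, b i = b' i) →
    phat a b n = phat a' b' n := by
  intro n
  induction n using Nat.strong_induction_on with
  | _ n ih =>
    match n with
    | 0 => intro _ _; rfl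
    | 1 =>
      intro ha hb
      rw [phat_one, phat_one, ha 0 one_pos, hb 0 one_pos]
    | (k+2) =>
      intro ha hb
      rw [phat_two, phat_two, ha (k+1) (by omega), hb (k+1) (by omega), hb k (by omega),
        ih (k+1) (by omega) (fun i hi => ha i (by omega)) (fun i hi => hb i (by omega)),
        ih k (by omega) (fun i hi => ha i (by omega)) (fun i hi => hb i (by omega))]


lemma phat_deg (n : ℕ) (hb : ∀ j < n, b j ≠ 0) :
    (phat a b n).natDegree = n ∧ (phat a b n).leadingCoeff = ∏ j ∈ Finset.range n, (b j)⁻¹ := by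
  induction n using Nat.strong_induction_on with
  | _ n ih =>
    match n with
    | 0 => exact ⟨by simp [phat_zero], by simp [phat_zero]⟩
    | 1 =>
      have h0 : (b 0)⁻¹ ≠ 0 := inv_ne_zero (hb 0 one_pos)
      constructor
      · rw [phat_one, natDegree_C_mul h0, natDegree_X_sub_C]
      · rw [phat_one, leadingCoeff_mul, leadingCoeff_C, (monic_X_sub_C (a 0)).leadingCoeff,
          mul_one, Finset.prod_range_one]
    | (k+2) =>
      obtain ⟨hd1, hl1⟩ := ih (k+1) (by omega) (fun j hj => hb j (by omega))
      obtain ⟨hd0, hl0⟩ := ih k (by omega) (fun j hj => hb j (by omega))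
      have hinv : (b (k+1))⁻¹ ≠ 0 := inv_ne_zero (hb (k+1) (by omega))
      have hp1ne : phat a b (k+1) ≠ 0 := fun h => by simp [h] at hd1
      have hdX : ((X - C (a (k+1))) * phat a b (k+1)).natDegree = k + 2 := by
        rw [natDegree_mul (X_sub_C_ne_zero _) hp1ne, natDegree_X_sub_C, hd1]; omega
      have hdC : (C (b k) * phat a b k).natDegree < k + 2 := by
        calc (C (b k) * phat a b k).natDegree ≤ (phat a b k).natDegree :=
              natDegree_C_mul_le _ _
        _ < k + 2 := by omega
      have hsub : ((X - C (a (k+1))) * phat a b (k+1) - C (b k) * phat a b k).natDegree = k+2 := by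
        rw [natDegree_sub_eq_left_of_natDegree_lt (by omega : (C (b k) * phat a b k).natDegree < ((X - C (a (k+1))) * phat a b (k+1)).natDegree)]
        exact hdX
      have hlsub : ((X - C (a (k+1))) * phat a b (k+1) - C (b k) * phat a b k).leadingCoeff
          = ∏ j ∈ Finset.range (k+1), (b j)⁻¹ := by
        rw [leadingCoeff, hsub]
        rw [coeff_sub, coeff_eq_zero_of_natDegree_lt (lt_of_le_of_lt (natDegree_C_mul_le _ _) (by omega)), sub_zero]
        have : ((X - C (a (k+1))) * phat a b (k+1)).coeff (k+2)
            = ((X - C (a (k+1))) * phat a b (k+1)).leadingCoeff := by rw [leadingCoeff, hdX]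
        rw [this, leadingCoeff_mul, (monic_X_sub_C _).leadingCoeff, one_mul, hl1]
      constructor
      · rw [phat_two, natDegree_C_mul hinv, hsub]
      · rw [phat_two, leadingCoeff_mul, leadingCoeff_C, hlsub,
          Finset.prod_range_succ (fun j => (b j)⁻¹) (k+1), mul_comm]



lemma prod_form (hb : ∀ j ≤ N, (0:ℝ) < b j) (lam : Fin (N+1) → ℝ)
    (hinj : Function.Injective lam)
    (hzero : ∀ k, eval (lam k) (phat a b (N+1)) = 0) :
    phat a b (N+1) = C (∏ j ∈ Finset.range (N+1), (b j)⁻¹) *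
      ∏ k : Fin (N+1), (X - C (lam k)) := by
  obtain ⟨hd, hl⟩ := phat_deg (N+1) (fun j hj => ne_of_gt (hb j (by omega)))
  set c := ∏ j ∈ Finset.range (N+1), (b j)⁻¹ with hcdef
  have hcpos : 0 < c := Finset.prod_pos (fun j hj => inv_pos.mpr (hb j (by
    simp only [Finset.mem_range] at hj; omega)))
  have hcne : c ≠ 0 := ne_of_gt hcpos
  have hq : (∏ k : Fin (N+1), (X - C (lam k) : Polynomial ℝ)).Monic :=
    monic_prod_of_monic _ _ (fun k _ => monic_X_sub_C _)
  have hqd : (∏ k : Fin (N+1), (X - C (lam k) : Polynomial ℝ)).natDegree = N+1 := by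
    rw [natDegree_prod _ _ (fun k _ => X_sub_C_ne_zero _)]
    simp
  set q := C c * ∏ k : Fin (N+1), (X - C (lam k)) with hqdef
  have hqd' : q.natDegree = N+1 := by rw [hqdef, natDegree_C_mul hcne, hqd]
  have hc1 : (phat a b (N+1)).coeff (N+1) = c := by rw [← hl, leadingCoeff, hd]
  have hc2 : q.coeff (N+1) = c := by
    have h3 : (∏ k : Fin (N+1), (X - C (lam k) : Polynomial ℝ)).coeff (N+1) = 1 := by
      have := hq.coeff_natDegree
      rwa [hqd] at this
    rw [hqdef, coeff_C_mul, h3, mul_one]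
  have key : phat a b (N+1) - q = 0 := by
    have hev : ∀ k, eval (lam k) (phat a b (N+1) - q) = 0 := by
      intro k
      rw [eval_sub, hzero k, hqdef, eval_mul, eval_prod,
        Finset.prod_eq_zero (Finset.mem_univ k) (by simp), mul_zero, sub_zero]
    have hcoeff : (phat a b (N+1) - q).coeff (N+1) = 0 := by
      rw [coeff_sub, hc1, hc2, sub_self]
    by_cases hD : phat a b (N+1) - q = 0
    · exact hD
    · have hle : (phat a b (N+1) - q).natDegree ≤ N+1 :=
        le_trans (natDegree_sub_le _ _) (by rw [hd, hqd']; omega)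
      have hne : (phat a b (N+1) - q).natDegree ≠ N+1 := by
        intro h
        exact hD (leadingCoeff_eq_zero.mp (by rw [leadingCoeff, h, hcoeff]))
      exact eq_zero_of_natDegree_lt_card_of_eval_eq_zero _ hinj hev
        (by simp only [Fintype.card_fin]; omega)
  exact sub_eq_zero.mp key

lemma deriv_sign (hb : ∀ j ≤ N, (0:ℝ) < b j) (lam : Fin (N+1) → ℝ)
    (hmono : StrictMono lam)
    (hzero : ∀ k, eval (lam k) (phat a b (N+1)) = 0) (k : Fin (N+1)) :
    0 < (-1:ℝ)^(N + (k:ℕ)) * eval (lam k) (derivative (phat a b (N+1))) := by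
  classical
  have hcpos : 0 < ∏ j ∈ Finset.range (N+1), (b j)⁻¹ := Finset.prod_pos
    (fun j hj => inv_pos.mpr (hb j (by simp only [Finset.mem_range] at hj; omega)))
  rw [prod_form hb lam hmono.injective hzero]
  rw [derivative_C_mul, eval_C_mul]
  -- rewrite the Finset product as a multiset product over roots
  have hprod : (∏ j : Fin (N+1), (X - C (lam j) : Polynomial ℝ))
      = (Multiset.map (fun r => X - C r) (Multiset.map lam Finset.univ.val)).prod := by
    rw [Multiset.map_map]
    rfl
  have hmem : lam k ∈ Multiset.map lam Finset.univ.val :=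
    Multiset.mem_map_of_mem _ (Finset.mem_univ k)
  have hder := eval_multiset_prod_X_sub_C_derivative (S := Multiset.map lam Finset.univ.val)
    (r := lam k) hmem
  have herase : (Multiset.map lam Finset.univ.val).erase (lam k)
      = Multiset.map lam (Finset.univ.val.erase k) :=
    (Multiset.map_erase lam hmono.injective k Finset.univ.val).symm
  have hev : eval (lam k) (derivative (∏ j : Fin (N+1), (X - C (lam j) : Polynomial ℝ)))
      = ∏ j ∈ Finset.univ.erase k, (lam k - lam j) := by
    rw [hprod, hder, herase, Multiset.map_map]
    rfl
  rw [hev]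
  -- sign analysis
  have hsplit : ∀ j ∈ Finset.univ.erase k, (lam k - lam j)
      = (if k < j then (-1:ℝ) else 1) * ((if k < j then (-1:ℝ) else 1) * (lam k - lam j)) := by
    intro j hj
    by_cases h : k < j <;> simp [h] <;> ring
  rw [Finset.prod_congr rfl hsplit, Finset.prod_mul_distrib]
  have hsign : (∏ j ∈ Finset.univ.erase k, (if k < j then (-1:ℝ) else 1))
      = (-1:ℝ)^(N - (k:ℕ)) := by
    rw [Finset.prod_ite, Finset.prod_const, Finset.prod_const, one_pow, mul_one]
    congr 1
    have : Finset.filter (fun j => k < j) (Finset.univ.erase k) = Finset.Ioi k := by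
      ext j
      simp only [Finset.mem_filter, Finset.mem_erase, Finset.mem_univ, true_and,
        Finset.mem_Ioi, and_iff_right_iff_imp]
      exact fun h => ⟨ne_of_gt h, trivial⟩
    rw [this, Fin.card_Ioi]
    omega
  rw [hsign]
  have hpos : 0 < ∏ j ∈ Finset.univ.erase k, ((if k < j then (-1:ℝ) else 1) * (lam k - lam j)) := by
    apply Finset.prod_pos
    intro j hj
    rcases Finset.mem_erase.mp hj with ⟨hne, -⟩
    rcases lt_or_gt_of_ne hne with h | h
    · -- j < k
      have : ¬ (k < j) := not_lt_of_gt h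
      simp only [this, if_false, one_mul, sub_pos]
      exact hmono h
    · simp only [h, if_true, neg_one_mul, neg_sub, sub_pos]
      exact hmono h
  have hkle : (k:ℕ) ≤ N := Fin.is_le k
  have hpow : (-1:ℝ)^(N + (k:ℕ)) * (-1:ℝ)^(N - (k:ℕ)) = 1 := by
    rw [← pow_add]
    have : N + (k:ℕ) + (N - (k:ℕ)) = 2*N := by omega
    rw [this, pow_mul]
    norm_num
  calc (0:ℝ) < (∏ j ∈ Finset.range (N+1), (b j)⁻¹) *
        (∏ j ∈ Finset.univ.erase k, ((if k < j then (-1:ℝ) else 1) * (lam k - lam j))) :=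
        mul_pos hcpos hpos
    _ = (-1:ℝ)^(N + (k:ℕ)) * ((∏ j ∈ Finset.range (N+1), (b j)⁻¹) *
        ((-1:ℝ)^(N - (k:ℕ)) * ∏ j ∈ Finset.univ.erase k,
          ((if k < j then (-1:ℝ) else 1) * (lam k - lam j)))) := by
        rw [← mul_assoc, ← mul_assoc, mul_comm ((-1:ℝ)^(N + (k:ℕ))) _, mul_assoc _ _ ((-1:ℝ)^(N - (k:ℕ))), hpow]
        ring

lemma phatN_sign (hb : ∀ j ≤ N, (0:ℝ) < b j) (lam : Fin (N+1) → ℝ)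
    (hmono : StrictMono lam)
    (hzero : ∀ k, eval (lam k) (phat a b (N+1)) = 0) (k : Fin (N+1)) :
    0 < (-1:ℝ)^(N + (k:ℕ)) * eval (lam k) (phat a b N) := by
  have hcd := congrArg (eval (lam k)) (cd_confluent (a := a) hb N le_rfl)
  simp only [eval_mul, eval_sub, eval_C, eval_finset_sum, eval_pow] at hcd
  rw [hzero k, mul_zero, sub_zero] at hcd
  have hsum : (1:ℝ) ≤ ∑ j ∈ Finset.range (N+1), (eval (lam k) (phat a b j))^2 := by
    have h0 : ((eval (lam k) (phat a b 0)))^2 = 1 := by simp [phat_zero]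
    calc (1:ℝ) = ∑ j ∈ Finset.range 1, (eval (lam k) (phat a b j))^2 := by
          simp [phat_zero]
      _ ≤ ∑ j ∈ Finset.range (N+1), (eval (lam k) (phat a b j))^2 :=
          Finset.sum_le_sum_of_subset_of_nonneg
            (Finset.range_subset_range.mpr (by omega))
            (fun i _ _ => sq_nonneg _)
  have hDp : 0 < eval (lam k) (derivative (phat a b (N+1))) * eval (lam k) (phat a b N) := by
    have hbN : 0 < b N := hb N le_rfl
    nlinarith [hcd, hsum]
  have hD := deriv_sign hb lam hmono hzero k
  set s := (-1:ℝ)^(N + (k:ℕ))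
  set D := eval (lam k) (derivative (phat a b (N+1)))
  set p := eval (lam k) (phat a b N)
  nlinarith [mul_pos hD hDp, sq_nonneg D, sq_nonneg (s*p)]

/-- sum of squares of the first N+1 orthonormal polynomials at a point -/
noncomputable def sumsq (a b : ℕ → ℝ) (N : ℕ) (x : ℝ) : ℝ :=
  ∑ j ∈ Finset.range (N+1), (eval x (phat a b j))^2

lemma one_le_sumsq (a b : ℕ → ℝ) (N : ℕ) (x : ℝ) : 1 ≤ sumsq a b N x := by
  unfold sumsq
  calc (1:ℝ) = ∑ j ∈ Finset.range 1, (eval x (phat a b j))^2 := by simp [phat_zero]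
    _ ≤ ∑ j ∈ Finset.range (N+1), (eval x (phat a b j))^2 :=
        Finset.sum_le_sum_of_subset_of_nonneg
          (Finset.range_subset_range.mpr (by omega)) (fun i _ _ => sq_nonneg _)

lemma sumsq_pos (a b : ℕ → ℝ) (N : ℕ) (x : ℝ) : 0 < sumsq a b N x :=
  lt_of_lt_of_le one_pos (one_le_sumsq a b N x)

lemma ortho (hb : ∀ j ≤ N, (0:ℝ) < b j) (lam : Fin (N+1) → ℝ)
    (hmono : StrictMono lam)
    (hzero : ∀ k, eval (lam k) (phat a b (N+1)) = 0) (i j : Fin (N+1)) :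
    ∑ k : Fin (N+1), (sumsq a b N (lam k))⁻¹ *
        (eval (lam k) (phat a b i) * eval (lam k) (phat a b j))
      = if (i:ℕ) = (j:ℕ) then 1 else 0 := by
  classical
  set w : Fin (N+1) → ℝ := fun k => (sumsq a b N (lam k))⁻¹ with hw
  have hwpos : ∀ k, 0 < w k := fun k => inv_pos.mpr (sumsq_pos a b N (lam k))
  set M : Matrix (Fin (N+1)) (Fin (N+1)) ℝ :=
    Matrix.of (fun k j => Real.sqrt (w k) * eval (lam k) (phat a b j)) with hM
  have hMMt : M * M.transpose = 1 := by
    ext k l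
    simp only [Matrix.mul_apply, Matrix.transpose_apply, hM, Matrix.of_apply,
      Matrix.one_apply]
    have hre : ∀ x : Fin (N+1),
        Real.sqrt (w k) * eval (lam k) (phat a b x) * (Real.sqrt (w l) * eval (lam l) (phat a b x))
        = (Real.sqrt (w k) * Real.sqrt (w l)) * (eval (lam k) (phat a b x) * eval (lam l) (phat a b x)) := by
      intro x; ring
    rw [Finset.sum_congr rfl (fun x _ => hre x), ← Finset.mul_sum]
    by_cases hkl : k = l
    · subst hkl
      simp only [if_pos rfl]
      have hsum : ∑ x : Fin (N+1), eval (lam k) (phat a b x) * eval (lam k) (phat a b x)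
          = sumsq a b N (lam k) := by
        rw [Fin.sum_univ_eq_sum_range (fun x => eval (lam k) (phat a b x) * eval (lam k) (phat a b x)) (N+1)]
        unfold sumsq
        exact Finset.sum_congr rfl (fun x _ => (pow_two _).symm)
      rw [hsum, Real.mul_self_sqrt (le_of_lt (hwpos k)), hw]
      exact inv_mul_cancel₀ (ne_of_gt (sumsq_pos a b N (lam k)))
    · simp only [if_neg hkl]
      have hne : lam k ≠ lam l := fun h => hkl (hmono.injective h)
      have hcd := cd_two (a := a) hb N le_rfl (lam k) (lam l)
      rw [hzero k, hzero l] at hcd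
      simp only [zero_mul, mul_zero, sub_zero] at hcd
      have hsum0 : ∑ x ∈ Finset.range (N+1), eval (lam k) (phat a b x) * eval (lam l) (phat a b x) = 0 := by
        rcases mul_eq_zero.mp hcd with h | h
        · exact absurd (sub_eq_zero.mp h) hne
        · exact h
      rw [Fin.sum_univ_eq_sum_range (fun x => eval (lam k) (phat a b x) * eval (lam l) (phat a b x)) (N+1), hsum0, mul_zero]
  have hMtM : M.transpose * M = 1 := mul_eq_one_comm.mp hMMt
  have := congrFun (congrFun hMtM i) j
  simp only [Matrix.mul_apply, Matrix.transpose_apply, hM, Matrix.of_apply,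
    Matrix.one_apply] at this
  rw [show ((if i = j then (1:ℝ) else 0) = if (i:ℕ) = (j:ℕ) then 1 else 0) from by
    by_cases h : i = j
    · simp [h]
    · rw [if_neg h, if_neg (fun hn => h (Fin.ext hn))]] at this
  have hre2 : ∀ x : Fin (N+1),
      Real.sqrt (w x) * eval (lam x) (phat a b i) * (Real.sqrt (w x) * eval (lam x) (phat a b j))
      = w x * (eval (lam x) (phat a b i) * eval (lam x) (phat a b j)) := by
    intro x
    have hs : Real.sqrt (w x) * Real.sqrt (w x) = w x := Real.mul_self_sqrt (le_of_lt (hwpos x))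
    linear_combination (eval (lam x) (phat a b i) * eval (lam x) (phat a b j)) * hs
  rw [Finset.sum_congr rfl (fun x _ => hre2 x)] at this
  exact this

noncomputable def ip {N : ℕ} (lam w : Fin (N+1) → ℝ) (f g : Polynomial ℝ) : ℝ :=
  ∑ k : Fin (N+1), w k * (eval (lam k) f * eval (lam k) g)

lemma ip_comm {lam w : Fin (N+1) → ℝ} (f g : Polynomial ℝ) :
    ip lam w f g = ip lam w g f := by
  unfold ip; apply Finset.sum_congr rfl; intros; ring

lemma ip_sub_left {lam w : Fin (N+1) → ℝ} (f g h : Polynomial ℝ) :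
    ip lam w (f - g) h = ip lam w f h - ip lam w g h := by
  unfold ip; rw [← Finset.sum_sub_distrib]
  apply Finset.sum_congr rfl; intros; simp [eval_sub]; ring

lemma ip_add_left {lam w : Fin (N+1) → ℝ} (f g h : Polynomial ℝ) :
    ip lam w (f + g) h = ip lam w f h + ip lam w g h := by
  unfold ip; rw [← Finset.sum_add_distrib]
  apply Finset.sum_congr rfl; intros; simp [eval_add]; ring

lemma ip_Cmul_left {lam w : Fin (N+1) → ℝ} (c : ℝ) (f g : Polynomial ℝ) :
    ip lam w (C c * f) g = c * ip lam w f g := by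
  unfold ip; rw [Finset.mul_sum]
  apply Finset.sum_congr rfl; intros; simp [eval_mul, eval_C]; ring

lemma ip_lower {lam w : Fin (N+1) → ℝ} (R : ℕ → Polynomial ℝ)
    (hdeg : ∀ m ≤ N, (R m).natDegree = m) (hne : ∀ m ≤ N, R m ≠ 0)
    (j : ℕ) (hj : j ≤ N) (horth : ∀ m, m < j → ip lam w (R j) (R m) = 0) :
    ∀ m, m < j → ∀ r : Polynomial ℝ, r.natDegree ≤ m → ip lam w (R j) r = 0 := by
  intro m
  induction m with
  | zero =>
    intro hm r hr
    have hr' : r = C (r.coeff 0) := Polynomial.eq_C_of_natDegree_le_zero hr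
    set d := (R 0).coeff 0 with hd
    have hR0 : R 0 = C d :=
      Polynomial.eq_C_of_natDegree_le_zero (le_of_eq (hdeg 0 (by omega)))
    have hd0 : d ≠ 0 := by
      intro h
      exact hne 0 (by omega) (by rw [hR0, h, C_0])
    have : r = C (r.coeff 0 / d) * R 0 := by
      rw [hR0, ← C_mul, div_mul_cancel₀ _ hd0]
      exact hr'
    rw [this, ip_comm, ip_Cmul_left, ip_comm]
    rw [horth 0 hm, mul_zero]
  | succ m ihm =>
    intro hm r hr
    have hlcne : (R (m+1)).leadingCoeff ≠ 0 :=
      leadingCoeff_ne_zero.mpr (hne (m+1) (by omega))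
    set c := r.coeff (m+1) / (R (m+1)).leadingCoeff with hc
    set r' := r - C c * R (m+1) with hr'def
    have hdegR : (R (m+1)).natDegree = m + 1 := hdeg (m+1) (by omega)
    have hr'deg : r'.natDegree ≤ m := by
      rw [Polynomial.natDegree_le_iff_coeff_eq_zero]
      intro i hi
      rw [hr'def, coeff_sub, coeff_C_mul]
      rcases Nat.lt_or_ge (m+1) i with h | h
      · rw [coeff_eq_zero_of_natDegree_lt (lt_of_le_of_lt hr h),
          coeff_eq_zero_of_natDegree_lt (by omega : (R (m+1)).natDegree < i), mul_zero, sub_zero]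
      · have hieq : i = m + 1 := by omega
        subst hieq
        rw [hc]
        rw [show (R (m+1)).coeff (m+1) = (R (m+1)).leadingCoeff from by
          rw [leadingCoeff, hdegR]]
        rw [div_mul_cancel₀ _ hlcne, sub_self]
    have hsplit : r = r' + C c * R (m+1) := by rw [hr'def]; ring
    rw [hsplit]
    rw [ip_comm, ip_add_left, ip_comm (g := R j), ip_Cmul_left, ip_comm (g := R j)]
    rw [ihm (by omega) r' hr'deg, horth (m+1) hm, mul_zero, add_zero]

lemma unique_ortho (lam : Fin (N+1) → ℝ) (hinj : Function.Injective lam)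
    (w : Fin (N+1) → ℝ) (hwpos : ∀ k, 0 < w k)
    (P Q : ℕ → Polynomial ℝ)
    (hPdeg : ∀ m ≤ N, (P m).natDegree = m) (hQdeg : ∀ m ≤ N, (Q m).natDegree = m)
    (hPlc : ∀ m ≤ N, 0 < (P m).leadingCoeff) (hQlc : ∀ m ≤ N, 0 < (Q m).leadingCoeff)
    (hP : ∀ i, i ≤ N → ∀ j, j ≤ N → ip lam w (P i) (P j) = if i = j then 1 else 0)
    (hQ : ∀ i, i ≤ N → ∀ j, j ≤ N → ip lam w (Q i) (Q j) = if i = j then 1 else 0) :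
    ∀ j ≤ N, Q j = P j := by
  have hPne : ∀ m ≤ N, P m ≠ 0 := fun m hm => leadingCoeff_ne_zero.mp (ne_of_gt (hPlc m hm))
  have hQne : ∀ m ≤ N, Q m ≠ 0 := fun m hm => leadingCoeff_ne_zero.mp (ne_of_gt (hQlc m hm))
  intro j hj
  set c := (Q j).leadingCoeff / (P j).leadingCoeff with hcdef
  have hcpos : 0 < c := div_pos (hQlc j hj) (hPlc j hj)
  set D := Q j - C c * P j with hDdef
  have hDcoeff : ∀ i, j ≤ i → D.coeff i = 0 := by
    intro i hi
    rw [hDdef, coeff_sub, coeff_C_mul]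
    rcases Nat.lt_or_ge j i with h | h
    · rw [coeff_eq_zero_of_natDegree_lt (by rw [hQdeg j hj]; omega),
        coeff_eq_zero_of_natDegree_lt (by rw [hPdeg j hj]; omega), mul_zero, sub_zero]
    · have : i = j := by omega
      subst this
      rw [show (Q i).coeff i = (Q i).leadingCoeff from by rw [leadingCoeff, hQdeg i hj],
        show (P i).coeff i = (P i).leadingCoeff from by rw [leadingCoeff, hPdeg i hj],
        hcdef, div_mul_cancel₀ _ (ne_of_gt (hPlc i hj)), sub_self]
  have hD : D = 0 := by
    rcases Nat.eq_zero_or_pos j with hj0 | hjpos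
    · subst hj0
      have : D = C (D.coeff 0) := Polynomial.eq_C_of_natDegree_le_zero (by
        rw [Polynomial.natDegree_le_iff_coeff_eq_zero]
        intro i hi; exact hDcoeff i (by omega))
      rw [this, hDcoeff 0 le_rfl, C_0]
    · have hDdeg : D.natDegree ≤ j - 1 := by
        rw [Polynomial.natDegree_le_iff_coeff_eq_zero]
        intro i hi; exact hDcoeff i (by omega)
      have h1 : ip lam w (Q j) D = 0 :=
        ip_lower Q hQdeg hQne j hj
          (fun m hm => by rw [hQ j hj m (by omega), if_neg (by omega)])
          (j-1) (by omega) D hDdeg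
      have h2 : ip lam w (P j) D = 0 :=
        ip_lower P hPdeg hPne j hj
          (fun m hm => by rw [hP j hj m (by omega), if_neg (by omega)])
          (j-1) (by omega) D hDdeg
      have h3 : ip lam w D D = 0 := by
        rw [hDdef, ip_sub_left, ← hDdef, h1, ip_Cmul_left, h2, mul_zero, sub_zero]
      have hev : ∀ k, eval (lam k) D = 0 := by
        intro k
        have hterm : ∀ x : Fin (N+1), x ∈ Finset.univ →
            0 ≤ w x * (eval (lam x) D * eval (lam x) D) := by
          intro x _
          exact mul_nonneg (le_of_lt (hwpos x)) (mul_self_nonneg _)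
        have := (Finset.sum_eq_zero_iff_of_nonneg hterm).mp h3 k (Finset.mem_univ k)
        have hwk := hwpos k
        have h4 : eval (lam k) D * eval (lam k) D = 0 := by
          rcases mul_eq_zero.mp this with h | h
          · exact absurd h (ne_of_gt hwk)
          · exact h
        exact mul_self_eq_zero.mp h4
      exact eq_zero_of_natDegree_lt_card_of_eval_eq_zero D hinj hev
        (by simp only [Fintype.card_fin]; omega)
  have hQP : Q j = C c * P j := by
    rw [← sub_eq_zero, ← hDdef, hD]
  have hc2 : c^2 = 1 := by
    have := hQ j hj j hj
    rw [if_pos rfl, hQP, ip_Cmul_left, ip_comm, ip_Cmul_left, ip_comm, hP j hj j hj,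
      if_pos rfl] at this
    nlinarith [this]
  have hc1 : c = 1 := by nlinarith [hc2, hcpos]
  rw [hQP, hc1, C_1, one_mul]

lemma extract (a' b' : ℕ → ℝ) (hb : ∀ j ≤ N, (0:ℝ) < b j) (hb2 : ∀ j ≤ N, (0:ℝ) < b' j)
    (heq : ∀ j ≤ N+1, phat a' b' j = phat a b j) :
    (∀ j ≤ N, a' j = a j) ∧ (∀ j ≤ N, b' j = b j) := by
  have hbeq : ∀ j ≤ N, b' j = b j := by
    intro j hj
    have h1 := phat_deg (a := a) (b := b) (j+1) (fun i hi => ne_of_gt (hb i (by omega)))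
    have h2 := phat_deg (a := a') (b := b') (j+1) (fun i hi => ne_of_gt (hb2 i (by omega)))
    have h1' := phat_deg (a := a) (b := b) j (fun i hi => ne_of_gt (hb i (by omega)))
    have h2' := phat_deg (a := a') (b := b') j (fun i hi => ne_of_gt (hb2 i (by omega)))
    have e1 : ∏ i ∈ Finset.range (j+1), (b' i)⁻¹ = ∏ i ∈ Finset.range (j+1), (b i)⁻¹ := by
      rw [← h1.2, ← h2.2, heq (j+1) (by omega)]
    have e2 : ∏ i ∈ Finset.range j, (b' i)⁻¹ = ∏ i ∈ Finset.range j, (b i)⁻¹ := by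
      rw [← h1'.2, ← h2'.2, heq j (by omega)]
    rw [Finset.prod_range_succ, Finset.prod_range_succ, e2] at e1
    have hprodne : ∏ i ∈ Finset.range j, (b i)⁻¹ ≠ 0 :=
      ne_of_gt (Finset.prod_pos (fun i hi => inv_pos.mpr (hb i (by
        simp only [Finset.mem_range] at hi; omega))))
    have : (b' j)⁻¹ = (b j)⁻¹ := mul_left_cancel₀ hprodne e1
    exact inv_injective this
  refine ⟨?_, hbeq⟩
  intro j hj
  match j with
  | 0 =>
    have h := phat_rec0 (a := a) (b := b) (ne_of_gt (hb 0 (by omega)))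
    have h' := phat_rec0 (a := a') (b := b') (ne_of_gt (hb2 0 (by omega)))
    rw [hbeq 0 (by omega), heq 1 (by omega)] at h'
    have := h'.symm.trans h
    exact C_inj.mp (sub_right_inj.mp this)
  | (j+1) =>
    have h := phat_rec (a := a) (b := b) j (ne_of_gt (hb (j+1) hj))
    have h' := phat_rec (a := a') (b := b') j (ne_of_gt (hb2 (j+1) hj))
    rw [hbeq (j+1) hj, hbeq j (by omega), heq (j+2) (by omega), heq (j+1) (by omega),
      heq j (by omega)] at h'
    have hkey : (C (a (j+1)) - C (a' (j+1))) * phat a b (j+1) = 0 := by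
      linear_combination h - h'
    have hpne : phat a b (j+1) ≠ 0 := by
      intro hz
      have := (phat_deg (a := a) (b := b) (j+1)
        (fun i hi => ne_of_gt (hb i (by omega)))).1
      rw [hz] at this
      simp at this
    rcases mul_eq_zero.mp hkey with h0 | h0
    · have : C (a (j+1)) = C (a' (j+1)) := by
        rw [sub_eq_zero] at h0; exact h0
      exact (C_inj.mp this).symm
    · exact absurd h0 hpne

lemma reflect_eval (hb : ∀ j ≤ N, (0:ℝ) < b j) (hN : 1 ≤ N)
    (a' b' : ℕ → ℝ)
    (ha' : ∀ j ≤ N, a' j = a (N - j))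
    (hb'lt : ∀ j, j < N → b' j = b (N - 1 - j))
    (hb'N : b' N = 1)
    {x : ℝ} (hz : eval x (phat a b (N+1)) = 0) :
    ∀ j ≤ N + 1, eval x (phat a' b' j) * eval x (phat a b N)
      = if j ≤ N then eval x (phat a b (N - j)) else 0 := by
  obtain ⟨M, rfl⟩ : ∃ M, N = M + 1 := ⟨N - 1, by omega⟩
  have hz' : eval x (phat a b (M+2)) = 0 := hz
  intro j
  induction j using Nat.strong_induction_on with
  | _ j ih =>
    match j with
    | 0 =>
      intro _
      rw [if_pos (by omega)]
      simp [phat_zero]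
    | 1 =>
      intro _
      rw [if_pos (by omega : 1 ≤ M + 1)]
      have hb'0 : b' 0 = b M := by rw [hb'lt 0 (by omega)]; congr 1 <;> omega
      have ha'0 : a' 0 = a (M+1) := by rw [ha' 0 (by omega)]; congr 1 <;> omega
      have hbM1 : b (M+1) ≠ 0 := ne_of_gt (hb (M+1) le_rfl)
      have hbM : b M ≠ 0 := ne_of_gt (hb M (by omega))
      have hr := eval_rec (a := a) (b := b) M hbM1 x
      rw [hz'] at hr
      rw [mul_zero] at hr
      -- 0 = (x - a (M+1)) * eval p_{M+1} - b M * eval p_M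
      have he1 : eval x (phat a' b' 1) = (b M)⁻¹ * (x - a (M+1)) := by
        rw [phat_one, eval_mul, eval_C, eval_sub, eval_X, eval_C, hb'0, ha'0]
      rw [he1]
      have hgoal : (M + 1 - 1) = M := by omega
      rw [hgoal]
      field_simp
      linear_combination -hr
    | (j+2) =>
      intro hj2
      have hQ1 := ih (j+1) (by omega) (by omega)
      have hQ0 := ih j (by omega) (by omega)
      rw [if_pos (by omega : j+1 ≤ M+1)] at hQ1
      rw [if_pos (by omega : j ≤ M+1)] at hQ0
      have hb'j1 : b' (j+1) ≠ 0 := by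
        rcases Nat.lt_or_ge (j+1) (M+1) with h | h
        · rw [hb'lt (j+1) h]; exact ne_of_gt (hb _ (by omega))
        · have : j + 1 = M + 1 := by omega
          rw [this, hb'N]; norm_num
      have hr' := eval_rec (a := a') (b := b') j hb'j1 x
      have hmul := congrArg (· * eval x (phat a b (M+1))) hr'
      simp only [sub_mul, mul_assoc] at hmul
      rw [hQ1, hQ0] at hmul
      -- hmul : b' (j+1) * (eval Q_{j+2} * eval p_{M+1}) = (x - a'(j+1)) * eval p_{M+1-(j+1)} - b' j * eval p_{M+1-j}
      rcases Nat.lt_or_ge (j+2) (M+2) with hcase | hcase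
      · -- j+2 ≤ M+1
        rw [if_pos (by omega : j+2 ≤ M+1)]
        set m := M - 1 - j with hm
        have e0 : M + 1 - (j+1) = m + 1 := by omega
        have e1 : M + 1 - j = m + 2 := by omega
        have e2 : M + 1 - (j+2) = m := by omega
        have eb1 : b' (j+1) = b m := by rw [hb'lt (j+1) (by omega)]; congr 1 <;> omega
        have ea1 : a' (j+1) = a (m+1) := by rw [ha' (j+1) (by omega)]; congr 1 <;> omega
        have eb0 : b' j = b (m+1) := by rw [hb'lt j (by omega)]; congr 1 <;> omega
        rw [e0, e1, eb1, ea1, eb0] at hmul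
        rw [e2]
        have hr := eval_rec (a := a) (b := b) m (ne_of_gt (hb (m+1) (by omega))) x
        have hbm : b m ≠ 0 := ne_of_gt (hb m (by omega))
        -- hmul : b m * (Q_{j+2} p) = (x - a (m+1)) * eval p_{m+1} - b (m+1) * eval p_{m+2}
        -- hr : b (m+1) * eval p_{m+2} = (x - a (m+1)) * eval p_{m+1} - b m * eval p_m
        have : b m * (eval x (phat a' b' (j+2)) * eval x (phat a b (M+1)))
            = b m * eval x (phat a b m) := by linear_combination hmul - hr
        exact mul_left_cancel₀ hbm this
      · -- j + 2 = M + 2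
        have hjM : j = M := by omega
        subst hjM
        rw [if_neg (by omega)]
        have eb1 : b' (j+1) = 1 := hb'N
        have ea1 : a' (j+1) = a 0 := by rw [ha' (j+1) le_rfl]; congr 1 <;> omega
        have eb0 : b' j = b 0 := by
          rcases Nat.eq_zero_or_pos j with h0 | h0
          · subst h0; rw [hb'lt 0 (by omega)]
          · rw [hb'lt j (by omega)]; congr 1 <;> omega
        have e0 : j + 1 - (j+1) = 0 := by omega
        have e1 : j + 1 - j = 1 := by omega
        rw [e0, e1, eb1, ea1, eb0] at hmul
        have hr0 := eval_rec0 (a := a) (b := b) (ne_of_gt (hb 0 (by omega))) x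
        rw [phat_zero] at hmul
        simp only [eval_one, mul_one, one_mul] at hmul
        linear_combination hmul - hr0

end Jac

open Jac in
/-- Let `λ_0 < ... < λ_N` be the zeros of `P̂_{N+1}` (the eigenvalues of the Jacobi
    matrix `H_{[0,N]}` with diagonal `a` and positive off-diagonal `b`). Then
    `P̂_N(λ_k) = (-1)^{N+k}` for all `k` iff `H_{[0,N]}` is persymmetric (mirror
    symmetric), i.e. `a_k = a_{N-k}` for all `k ≤ N` and `b_n = b_{N-1-n}` for all
    `n < N`. -/
theorem stmt_18 (N : ℕ) (a b : ℕ → ℝ)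
    (hb : ∀ j < N, 0 < b j) (hbN : b N = 1)
    (lam : Fin (N + 1) → ℝ) (hmono : StrictMono lam)
    (hzero : ∀ k : Fin (N + 1), (phat a b (N + 1)).eval (lam k) = 0) :
    (∀ k : Fin (N + 1), (phat a b N).eval (lam k) = (-1) ^ (N + (k : ℕ))) ↔
      ((∀ k ≤ N, a k = a (N - k)) ∧ (∀ n < N, b n = b (N - 1 - n))) := by

  classical
  have hble : ∀ j ≤ N, (0:ℝ) < b j := by
    intro j hj
    rcases lt_or_eq_of_le hj with h | h
    · exact hb j h
    · subst h; rw [hbN]; norm_num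
  rcases Nat.eq_zero_or_pos N with rfl | hN1
  · constructor
    · rintro -
      refine ⟨fun k hk => ?_, fun n hn => absurd hn (Nat.not_lt_zero n)⟩
      have : k = 0 := Nat.le_zero.mp hk
      subst this; rfl
    · rintro - k
      have hk0 : (k:ℕ) = 0 := Nat.lt_one_iff.mp k.isLt
      rw [hk0]
      simp [phat_zero]
  set a' : ℕ → ℝ := fun n => a (N - n) with ha'def
  set b' : ℕ → ℝ := fun n => if n < N then b (N - 1 - n) else 1 with hb'def
  have ha'e : ∀ j, j ≤ N → a' j = a (N - j) := fun j _ => rfl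
  have hb'lt : ∀ j, j < N → b' j = b (N - 1 - j) := by
    intro j hj; simp only [hb'def, if_pos hj]
  have hb'N : b' N = 1 := by simp [hb'def]
  have hb'le : ∀ j ≤ N, (0:ℝ) < b' j := by
    intro j hj
    by_cases h : j < N
    · rw [hb'lt j h]; exact hble _ (by omega)
    · have : j = N := by omega
      rw [this, hb'N]; norm_num
  have hrefl : ∀ k : Fin (N+1), ∀ j ≤ N + 1,
      eval (lam k) (phat a' b' j) * eval (lam k) (phat a b N)
        = if j ≤ N then eval (lam k) (phat a b (N - j)) else 0 :=
    fun k => Jac.reflect_eval hble hN1 a' b' ha'e hb'lt hb'N (hzero k)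
  have hPNne : ∀ k, eval (lam k) (phat a b N) ≠ 0 :=
    fun k => Jac.phatN_ne_zero hble (hzero k)
  constructor
  · -- forward direction
    intro hval
    have hsq : ∀ k : Fin (N+1),
        eval (lam k) (phat a b N) * eval (lam k) (phat a b N) = 1 := by
      intro k
      have h := hval k
      rw [h, ← pow_add]
      have he : (N + (k:ℕ)) + (N + (k:ℕ)) = 2*(N+(k:ℕ)) := by ring
      rw [he, pow_mul]; norm_num
    have hz' : ∀ k : Fin (N+1), eval (lam k) (phat a' b' (N+1)) = 0 := by
      intro k
      have h := hrefl k (N+1) le_rfl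
      rw [if_neg (by omega)] at h
      exact (mul_eq_zero.mp h).resolve_right (hPNne k)
    have hss : ∀ k : Fin (N+1), sumsq a' b' N (lam k) = sumsq a b N (lam k) := by
      intro k
      unfold sumsq
      have h1 : ∀ j ∈ Finset.range (N+1),
          (eval (lam k) (phat a' b' j))^2 = (eval (lam k) (phat a b (N-j)))^2 := by
        intro j hj
        have hjN : j ≤ N := by simp only [Finset.mem_range] at hj; omega
        have h := hrefl k j (by omega)
        rw [if_pos hjN] at h
        calc (eval (lam k) (phat a' b' j))^2
            = (eval (lam k) (phat a' b' j))^2 *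
              (eval (lam k) (phat a b N) * eval (lam k) (phat a b N)) := by
              rw [hsq k, mul_one]
          _ = (eval (lam k) (phat a' b' j) * eval (lam k) (phat a b N)) *
              (eval (lam k) (phat a' b' j) * eval (lam k) (phat a b N)) := by ring
          _ = (eval (lam k) (phat a b (N-j)))^2 := by rw [h]; ring
      rw [Finset.sum_congr rfl h1]
      have hrefsum := Finset.sum_range_reflect
        (fun j => (eval (lam k) (phat a b j))^2) (N+1)
      rw [← hrefsum]
      apply Finset.sum_congr rfl
      intro j hj
      congr 2 <;> omega
    set w : Fin (N+1) → ℝ := fun k => (sumsq a b N (lam k))⁻¹ with hwdef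
    have hwpos : ∀ k, 0 < w k := fun k => inv_pos.mpr (Jac.sumsq_pos a b N (lam k))
    have hPdeg : ∀ m ≤ N, (phat a b m).natDegree = m :=
      fun m hm => (Jac.phat_deg m (fun i hi => ne_of_gt (hble i (by omega)))).1
    have hQdeg : ∀ m ≤ N, (phat a' b' m).natDegree = m :=
      fun m hm => (Jac.phat_deg m (fun i hi => ne_of_gt (hb'le i (by omega)))).1
    have hPlc : ∀ m ≤ N, 0 < (phat a b m).leadingCoeff := by
      intro m hm
      rw [(Jac.phat_deg m (fun i hi => ne_of_gt (hble i (by omega)))).2]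
      exact Finset.prod_pos (fun i hi => inv_pos.mpr (hble i (by
        simp only [Finset.mem_range] at hi; omega)))
    have hQlc : ∀ m ≤ N, 0 < (phat a' b' m).leadingCoeff := by
      intro m hm
      rw [(Jac.phat_deg m (fun i hi => ne_of_gt (hb'le i (by omega)))).2]
      exact Finset.prod_pos (fun i hi => inv_pos.mpr (hb'le i (by
        simp only [Finset.mem_range] at hi; omega)))
    have hP : ∀ i, i ≤ N → ∀ j, j ≤ N →
        Jac.ip lam w (phat a b i) (phat a b j) = if i = j then 1 else 0 := by
      intro i hi j hj
      have h := Jac.ortho hble lam hmono hzero ⟨i, by omega⟩ ⟨j, by omega⟩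
      unfold Jac.ip
      simpa [hwdef] using h
    have hQ : ∀ i, i ≤ N → ∀ j, j ≤ N →
        Jac.ip lam w (phat a' b' i) (phat a' b' j) = if i = j then 1 else 0 := by
      intro i hi j hj
      have h := Jac.ortho hb'le lam hmono hz' ⟨i, by omega⟩ ⟨j, by omega⟩
      unfold Jac.ip
      simpa [hwdef, hss] using h
    have huniq := Jac.unique_ortho lam hmono.injective w hwpos
      (phat a b) (phat a' b') hPdeg hQdeg hPlc hQlc hP hQ
    have heqTop : phat a' b' (N+1) = phat a b (N+1) := by
      rw [Jac.prod_form hble lam hmono.injective hzero,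
        Jac.prod_form hb'le lam hmono.injective hz']
      congr 2
      rw [Finset.prod_range_succ, Finset.prod_range_succ, hb'N, hbN]
      congr 1
      rw [← Finset.prod_range_reflect (fun j => (b j)⁻¹) N]
      apply Finset.prod_congr rfl
      intro j hj
      rw [hb'lt j (by simp only [Finset.mem_range] at hj; omega)]
    have heqAll : ∀ j ≤ N+1, phat a' b' j = phat a b j := by
      intro j hj
      rcases Nat.lt_or_ge j (N+1) with h | h
      · exact huniq j (by omega)
      · have : j = N+1 := by omega
        rw [this]; exact heqTop
    obtain ⟨hA, hB⟩ := Jac.extract a' b' hble hb'le heqAll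
    constructor
    · intro k hk
      exact ((hA k hk).symm).trans (ha'e k hk) |>.symm.symm
    · intro n hn
      exact ((hB n (by omega)).symm).trans (hb'lt n hn)
  · -- backward direction
    rintro ⟨hA, hB⟩ k
    have heqN : phat a' b' N = phat a b N := by
      apply Jac.phat_congr a' a b' b N
      · intro i hi
        exact (ha'e i (by omega)).trans (hA i (by omega)).symm
      · intro i hi
        exact (hb'lt i (by omega)).trans (hB i (by omega)).symm
    have h := hrefl k N (by omega)
    rw [if_pos le_rfl, heqN] at h
    have hNN : N - N = 0 := by omega
    rw [hNN, phat_zero, eval_one] at h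
    have hsgn := Jac.phatN_sign hble lam hmono hzero k
    set s : ℝ := (-1)^(N + (k:ℕ)) with hs
    set e := eval (lam k) (phat a b N) with hedef
    have hs2 : s * s = 1 := by
      rw [hs, ← pow_add]
      have he : (N+(k:ℕ))+(N+(k:ℕ)) = 2*(N+(k:ℕ)) := by ring
      rw [he, pow_mul]; norm_num
    have hfac : (e - s) * (e + s) = 0 := by linear_combination h - hs2
    rcases mul_eq_zero.mp hfac with h0 | h0
    · exact sub_eq_zero.mp h0
    · exfalso
      have he' : e = -s := by linarith
      rw [he'] at hsgn
      nlinarith [hs2, hsgn]
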